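/- Let (A, u) be a unital basic pseudo hoop satisfying, for all n ≥ 1, all elements and all permutations π of {1, …, n}, the inequalities: (i) ((x₁·⋯·xₙ)→u)² ≤ (x_{π(1)}²·⋯·x_{π(n)}²)→u; (ii) (((x→y)ⁿ)→u)² ≤ ((x⇝y)^{2n})→u; (iii) (((x⇝y)ⁿ)→u)² ≤ ((x→y)^{2n})→u. Then every maximal filter of A is normal. -/

import Mathlib

/-- A pseudo hoop: a monoid `(A; ·, 1)` with two implications `→` (`himp`) and
`⇝` (`rimp`) satisfying the pseudo-hoop identities, where the induced order
`x ≤ y ↔ x→y = 1 ↔ x⇝y = 1` is the given partial order. -/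
class PseudoHoop (A : Type*) extends Monoid A, PartialOrder A where
  himp : A → A → A
  rimp : A → A → A
  himp_self : ∀ x : A, himp x x = 1
  rimp_self : ∀ x : A, rimp x x = 1
  himp_mul : ∀ x y z : A, himp (x * y) z = himp x (himp y z)
  rimp_mul : ∀ x y z : A, rimp (x * y) z = rimp y (rimp x z)
  div₁ : ∀ x y : A, himp x y * x = himp y x * y
  div₂ : ∀ x y : A, himp x y * x = x * rimp x y
  div₃ : ∀ x y : A, x * rimp x y = y * rimp y x
  le_iff_himp : ∀ x y : A, x ≤ y ↔ himp x y = 1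
  le_iff_rimp : ∀ x y : A, x ≤ y ↔ rimp x y = 1

/-- A basic pseudo hoop: a pseudo hoop satisfying (B1) and (B2). -/
class BasicPseudoHoop (A : Type*) extends PseudoHoop A where
  basic₁ : ∀ x y z : A,
    himp (himp x y) z ≤ himp (himp (himp y x) z) z
  basic₂ : ∀ x y z : A,
    rimp (rimp x y) z ≤ rimp (rimp (rimp y x) z) z

namespace PseudoHoop

variable {A : Type*} [PseudoHoop A]

/-- A filter: a nonempty subset closed under `·` and upward closed. -/
def IsFilter (F : Set A) : Prop :=
  F.Nonempty ∧ (∀ x ∈ F, ∀ y ∈ F, x * y ∈ F) ∧ ∀ x ∈ F, ∀ y : A, x ≤ y → y ∈ F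

/-- A maximal filter: a proper filter not properly contained in any proper filter. -/
def IsMaximalFilter (F : Set A) : Prop :=
  IsFilter F ∧ F ≠ Set.univ ∧
    ∀ G : Set A, IsFilter G → G ≠ Set.univ → F ⊆ G → F = G

/-- A normal filter: `x→y ∈ F` iff `x⇝y ∈ F`. -/
def IsNormalFilter (F : Set A) : Prop :=
  ∀ x y : A, himp x y ∈ F ↔ rimp x y ∈ F

/-- The filter generated by an element `a`: all `x` with `aᵏ ≤ x` for some `k ≥ 1`. -/
def genFilter (a : A) : Set A := {x : A | ∃ k : ℕ, 1 ≤ k ∧ a ^ k ≤ x}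

/-- A strong unit: an element generating the whole pseudo hoop as a filter. -/
def IsStrongUnit (u : A) : Prop := genFilter u = Set.univ

end PseudoHoop

open PseudoHoop


namespace PH
open PseudoHoop

variable {A : Type*} [PseudoHoop A]

lemma himp_eq_one {x y : A} (h : x ≤ y) : himp x y = 1 := (le_iff_himp x y).1 h
lemma rimp_eq_one {x y : A} (h : x ≤ y) : rimp x y = 1 := (le_iff_rimp x y).1 h
lemma le_of_himp {x y : A} (h : himp x y = 1) : x ≤ y := (le_iff_himp x y).2 h
lemma le_of_rimp {x y : A} (h : rimp x y = 1) : x ≤ y := (le_iff_rimp x y).2 h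

lemma rimp_one_aux (x z : A) : rimp x z = rimp x (rimp 1 z) := by
  have := rimp_mul (1 : A) x z
  rwa [one_mul] at this

lemma rimp_one_le (z : A) : rimp 1 z ≤ z := by
  apply le_of_rimp
  rw [rimp_one_aux (rimp 1 z) z, PseudoHoop.rimp_self]

lemma le_himp_one (z : A) : z ≤ himp 1 z := by
  apply le_of_himp
  have := himp_mul z (1 : A) z
  rw [mul_one, PseudoHoop.himp_self] at this
  exact this.symm

lemma himp_one_eq_rimp_one (z : A) : himp 1 z = rimp 1 z := by
  have := div₂ (1 : A) z
  rwa [mul_one, one_mul] at this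

lemma one_himp (z : A) : himp 1 z = z :=
  le_antisymm ((himp_one_eq_rimp_one z) ▸ rimp_one_le z) (le_himp_one z)

lemma le_one (x : A) : x ≤ 1 := by
  have h1 : himp x 1 * x = x := by
    have := div₁ x (1 : A)
    rwa [mul_one, one_himp] at this
  apply le_of_himp
  calc himp x 1 = himp (himp x 1 * x) 1 := by rw [h1]
    _ = himp (himp x 1) (himp x 1) := by rw [himp_mul]
    _ = 1 := PseudoHoop.himp_self _

lemma himp_one (x : A) : himp x 1 = 1 := himp_eq_one (le_one x)
lemma rimp_one (x : A) : rimp x 1 = 1 := rimp_eq_one (le_one x)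

lemma mul_le_right (x y : A) : x * y ≤ y := by
  apply le_of_himp
  rw [himp_mul, PseudoHoop.himp_self, himp_one]

lemma mul_le_left (x y : A) : x * y ≤ x := by
  apply le_of_rimp
  rw [rimp_mul, PseudoHoop.rimp_self, rimp_one]

lemma le_himp_left (w z : A) : z ≤ himp w z := by
  apply le_of_himp
  rw [← himp_mul]
  exact himp_eq_one (mul_le_left z w)

lemma mul_le_mul_left' {x y : A} (h : x ≤ y) (z : A) : x * z ≤ y * z := by
  apply le_of_himp
  rw [himp_mul]
  apply himp_eq_one
  refine h.trans (le_of_himp ?_)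
  rw [← himp_mul]
  exact PseudoHoop.himp_self _

lemma mul_le_mul_right' {x y : A} (h : x ≤ y) (z : A) : z * x ≤ z * y := by
  apply le_of_rimp
  rw [rimp_mul]
  apply rimp_eq_one
  refine h.trans (le_of_rimp ?_)
  rw [← rimp_mul]
  exact PseudoHoop.rimp_self _

lemma mul_le_mul {a b c d : A} (h1 : a ≤ b) (h2 : c ≤ d) : a * c ≤ b * d :=
  (mul_le_mul_left' h1 c).trans (mul_le_mul_right' h2 b)

lemma himp_mul_le (z y : A) : himp z y * z ≤ y := by
  rw [div₁]
  exact mul_le_right _ _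

section Filter
variable {F : Set A}

lemma one_mem (hF : IsFilter F) : (1 : A) ∈ F := by
  obtain ⟨x, hx⟩ := hF.1
  exact hF.2.2 x hx 1 (le_one x)

lemma pow_mem (hF : IsFilter F) {x : A} (hx : x ∈ F) : ∀ n : ℕ, 1 ≤ n → x ^ n ∈ F := by
  intro n hn
  induction n with
  | zero => omega
  | succ k ih =>
    rcases Nat.eq_or_lt_of_le hn with h | h
    · rw [← h, pow_one]; exact hx
    · rw [pow_succ]
      exact hF.2.1 _ (ih (by omega)) _ hx

lemma prod_mem (hF : IsFilter F) : ∀ l : List A, (∀ w ∈ l, w ∈ F) → l.prod ∈ F := by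
  intro l
  induction l with
  | nil => intro _; simpa using one_mem hF
  | cons w t ih =>
    intro h
    rw [List.prod_cons]
    exact hF.2.1 _ (h w List.mem_cons_self) _ (ih fun v hv => h v (List.mem_cons_of_mem _ hv))

lemma eq_univ_of_unit_mem {u : A} (hu : IsStrongUnit u) (hF : IsFilter F) (h : u ∈ F) :
    F = Set.univ := by
  ext x
  simp only [Set.mem_univ, iff_true]
  have hx : x ∈ genFilter u := by rw [hu]; trivial
  obtain ⟨k, hk, hkx⟩ := hx
  exact hF.2.2 _ (pow_mem hF h k hk) x hkx

end Filter

lemma exists_perm_ofFn {α : Type*} {l₁ l₂ : List α} (h : l₁.Perm l₂) :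
    ∃ σ : Equiv.Perm (Fin l₁.length), List.ofFn (fun i => l₁.get (σ i)) = l₂ := by
  induction h with
  | nil => exact ⟨1, by simp⟩
  | @cons x t₁ t₂ h ih =>
    obtain ⟨σ, hσ⟩ := ih
    refine ⟨Equiv.Perm.decomposeFin.symm (0, σ), ?_⟩
    show (List.ofFn fun i : Fin (t₁.length + 1) =>
      (x :: t₁).get ((Equiv.Perm.decomposeFin.symm (0, σ)) i)) = x :: t₂
    rw [List.ofFn_succ]
    simp only [Equiv.Perm.decomposeFin_symm_apply_zero,
      Equiv.Perm.decomposeFin_symm_apply_succ, Equiv.swap_self, Equiv.refl_apply,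
      List.get_cons_zero]
    rw [← hσ]
    rfl
  | @swap x y t =>
    refine ⟨Equiv.swap (0 : Fin (t.length + 2)) (1 : Fin (t.length + 2)), ?_⟩
    show (List.ofFn fun i : Fin (t.length + 2) =>
      (y :: x :: t).get ((Equiv.swap (0 : Fin (t.length + 2)) 1) i)) = x :: y :: t
    rw [List.ofFn_succ, List.ofFn_succ]
    simp only [Equiv.swap_apply_left, Fin.succ_zero_eq_one, Equiv.swap_apply_right]
    have hsw : ∀ i : Fin t.length,
        Equiv.swap (0 : Fin (t.length + 2)) 1 i.succ.succ = i.succ.succ := fun i =>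
      Equiv.swap_apply_of_ne_of_ne (Fin.succ_ne_zero _) (Fin.succ_succ_ne_one i)
    simp only [hsw, List.get_cons_zero]
    have h1 : (y :: x :: t).get (1 : Fin (t.length + 2)) = x := by simp
    rw [h1]
    have h2 : (fun i : Fin t.length => (y :: x :: t).get i.succ.succ) = t.get := rfl
    rw [h2, List.ofFn_get]
  | @trans l₁ l₂ l₃ h₁ h₂ ih₁ ih₂ =>
    obtain ⟨σ₁, hσ₁⟩ := ih₁
    obtain ⟨σ₂, hσ₂⟩ := ih₂
    have h12 : l₁.length = l₂.length := h₁.length_eq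
    refine ⟨(finCongr h12).trans (σ₂.trans ((finCongr h12.symm).trans σ₁)), ?_⟩
    subst hσ₂
    subst hσ₁
    apply List.ext_get
    · simp
    intro i hi₁ hi₃
    simp only [List.get_ofFn]
    congr 1

lemma key {A : Type*} [PseudoHoop A] {u : A} (hu : IsStrongUnit u) {F : Set A}
    (hF : IsMaximalFilter F)
    (h1 : ∀ (n : ℕ), 1 ≤ n → ∀ (x : Fin n → A) (π : Equiv.Perm (Fin n)),
      himp (List.ofFn x).prod u ^ 2 ≤ himp (List.ofFn (fun i => x (π i) ^ 2)).prod u)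
    {a : A} (ha : a ∉ F) : ∃ m : ℕ, 1 ≤ m ∧ himp (a ^ m) u ∈ F := by
  classical
  obtain ⟨hFf, hFne, hFmax⟩ := hF
  set G : Set A := {z | ∃ l : List A, (∀ w ∈ l, w ∈ F ∨ w = a) ∧ l.prod ≤ z} with hGdef
  have hG : IsFilter G := by
    refine ⟨⟨1, [], by simp, le_refl 1⟩, ?_, ?_⟩
    · rintro z ⟨l₁, hl₁, hp₁⟩ w ⟨l₂, hl₂, hp₂⟩
      refine ⟨l₁ ++ l₂, ?_, ?_⟩
      · intro v hv
        rcases List.mem_append.1 hv with h | h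
        · exact hl₁ v h
        · exact hl₂ v h
      · rw [List.prod_append]; exact mul_le_mul hp₁ hp₂
    · rintro z ⟨l, hl, hp⟩ w hzw
      exact ⟨l, hl, hp.trans hzw⟩
  have hFG : F ⊆ G := fun f hf => ⟨[f], by simp [hf], by simp⟩
  have haG : a ∈ G := ⟨[a], by simp, by simp⟩
  have hGuniv : G = Set.univ := by
    by_contra hne
    exact ha ((hFmax G hG hne hFG) ▸ haG)
  have huG : u ∈ G := hGuniv ▸ Set.mem_univ u
  obtain ⟨l, hl, hlu⟩ := huG
  have hex : ∃ w ∈ l, w ∉ F := by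
    by_contra hall
    push_neg at hall
    exact hFne (eq_univ_of_unit_mem hu hFf (hFf.2.2 _ (prod_mem hFf l hall) u hlu))
  obtain ⟨w₀, hw₀l, hw₀F⟩ := hex
  have hperm := (List.filter_append_perm (fun w => decide (w ∈ F)) l).symm
  obtain ⟨σ, hσ⟩ := exists_perm_ofFn hperm
  have hn : 1 ≤ l.length := List.length_pos_iff.2 (List.ne_nil_of_mem hw₀l)
  have hkey := h1 l.length hn l.get σ
  rw [List.ofFn_get, himp_eq_one hlu, one_pow] at hkey
  have hprodle : (List.ofFn (fun i => l.get (σ i) ^ 2)).prod ≤ u :=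
    le_of_himp (le_antisymm (le_one _) hkey)
  have hmap : List.ofFn (fun i => l.get (σ i) ^ 2)
      = ((l.filter (fun w => decide (w ∈ F))).map (· ^ 2))
        ++ ((l.filter (fun w => !decide (w ∈ F))).map (· ^ 2)) := by
    rw [← List.map_append, ← hσ, List.map_ofFn]
    rfl
  rw [hmap, List.prod_append] at hprodle
  set lF := l.filter (fun w => decide (w ∈ F)) with hlF
  set lA := l.filter (fun w => !decide (w ∈ F)) with hlA
  have hq : (lF.map (· ^ 2)).prod ∈ F := by
    apply prod_mem hFf
    intro v hv
    obtain ⟨w, hw, rfl⟩ := List.mem_map.1 hv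
    have hwF : w ∈ F := by simpa using (List.mem_filter.1 hw).2
    exact pow_mem hFf hwF 2 (by omega)
  have hAmem : ∀ w ∈ lA, w = a := by
    intro w hw
    have h1' := List.mem_filter.1 hw
    have h2' : w ∉ F := by simpa using h1'.2
    rcases hl w h1'.1 with h | h
    · exact absurd h h2'
    · exact h
  have ht : (lA.map (· ^ 2)).prod = a ^ (2 * lA.length) := by
    have hall : ∀ v ∈ lA.map (· ^ 2), v = a ^ 2 := by
      intro v hv
      obtain ⟨w, hw, rfl⟩ := List.mem_map.1 hv
      rw [hAmem w hw]
    rw [List.prod_eq_pow_card _ _ hall, List.length_map, ← pow_mul]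
  rw [ht] at hprodle
  have hw₀A : w₀ ∈ lA := List.mem_filter.2 ⟨hw₀l, by simpa using hw₀F⟩
  have hlen : 1 ≤ lA.length := List.length_pos_iff.2 (List.ne_nil_of_mem hw₀A)
  have hqle : (lF.map (· ^ 2)).prod ≤ himp (a ^ (2 * lA.length)) u := by
    apply le_of_himp
    rw [← himp_mul]
    exact himp_eq_one hprodle
  exact ⟨2 * lA.length, by omega, hFf.2.2 _ hq _ hqle⟩


end PH


/-- A unital basic pseudo hoop `(A, u)` satisfying inequalities
(i)-(iii) has every maximal filter normal. -/
theorem stmt_17 {A : Type*} [BasicPseudoHoop A] (u : A) (hu : IsStrongUnit u)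
    (h1 : ∀ (n : ℕ), 1 ≤ n → ∀ (x : Fin n → A) (π : Equiv.Perm (Fin n)),
      PseudoHoop.himp (List.ofFn x).prod u ^ 2 ≤
        PseudoHoop.himp (List.ofFn (fun i => x (π i) ^ 2)).prod u)
    (h2 : ∀ (n : ℕ), 1 ≤ n → ∀ x y : A,
      PseudoHoop.himp (PseudoHoop.himp x y ^ n) u ^ 2 ≤
        PseudoHoop.himp (PseudoHoop.rimp x y ^ (2 * n)) u)
    (h3 : ∀ (n : ℕ), 1 ≤ n → ∀ x y : A,
      PseudoHoop.himp (PseudoHoop.rimp x y ^ n) u ^ 2 ≤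
        PseudoHoop.himp (PseudoHoop.himp x y ^ (2 * n)) u) :
    ∀ F : Set A, IsMaximalFilter F → IsNormalFilter F := by
  intro F hF x y
  have hFf := hF.1
  constructor
  · intro hxy
    by_contra hneg
    obtain ⟨m, hm, hmem⟩ := PH.key hu hF h1 hneg
    have h3' := h3 m hm x y
    have hs : PseudoHoop.himp (PseudoHoop.rimp x y ^ m) u ^ 2 ∈ F :=
      PH.pow_mem hFf hmem 2 (by omega)
    have h4 : PseudoHoop.himp (PseudoHoop.himp x y ^ (2 * m)) u ∈ F := hFf.2.2 _ hs _ h3'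
    have h5 : PseudoHoop.himp x y ^ (2 * m) ∈ F := PH.pow_mem hFf hxy (2 * m) (by omega)
    have h6 := hFf.2.1 _ h4 _ h5
    have h7 : u ∈ F := hFf.2.2 _ h6 u (PH.himp_mul_le _ _)
    exact hF.2.1 (PH.eq_univ_of_unit_mem hu hFf h7)
  · intro hxy
    by_contra hneg
    obtain ⟨m, hm, hmem⟩ := PH.key hu hF h1 hneg
    have h2' := h2 m hm x y
    have hs : PseudoHoop.himp (PseudoHoop.himp x y ^ m) u ^ 2 ∈ F :=
      PH.pow_mem hFf hmem 2 (by omega)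
    have h4 : PseudoHoop.himp (PseudoHoop.rimp x y ^ (2 * m)) u ∈ F := hFf.2.2 _ hs _ h2'
    have h5 : PseudoHoop.rimp x y ^ (2 * m) ∈ F := PH.pow_mem hFf hxy (2 * m) (by omega)
    have h6 := hFf.2.1 _ h4 _ h5
    have h7 : u ∈ F := hFf.2.2 _ h6 u (PH.himp_mul_le _ _)
    exact hF.2.1 (PH.eq_univ_of_unit_mem hu hFf h7)
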